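/- Let L be an even lattice of signature (2,n), let D be the exponent of A_L, and let r ∈ L be a stably reflective vector, i.e. r is primitive, (r,r) < 0, and σ_r or −σ_r lies in Õ(L). Assume it is not the case that D = 4, (r,r) = −4 and div(r) = 2. Let K_r = {x ∈ L : (x,r) = 0}, an even lattice with the restricted form. Then every φ ∈ Õ(L) with φ(K_r) = K_r restricts on K_r to an element of Õ(K_r); that is, the ℚ-linear extension of φ satisfies φ(y) − y ∈ K_r for every y ∈ K_r^∨. -/

import Mathlib

/-- The dual lattice `L^∨ = {y ∈ L ⊗ ℚ : (y,l) ∈ ℤ for all l ∈ L}`, viewed inside the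
ambient rational vector space `V` (which plays the role of `L ⊗ ℚ`). -/
def DualSet {V : Type} [AddCommGroup V] [Module ℚ V]
    (B : V →ₗ[ℚ] V →ₗ[ℚ] ℚ) (L : Submodule ℤ V) : Set V :=
  {y : V | ∀ l ∈ L, ∃ a : ℤ, B y l = (a : ℚ)}

/-- `L` is a (full, integral, nondegenerate, symmetric) lattice in the rational vector
space `V` with respect to the bilinear form `B`:  it is finitely generated, spans `V`
over `ℚ`, the form is symmetric, nondegenerate, and `ℤ`-valued on `L`. -/
def IsIntLattice {V : Type} [AddCommGroup V] [Module ℚ V]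
    (B : V →ₗ[ℚ] V →ₗ[ℚ] ℚ) (L : Submodule ℤ V) : Prop :=
  L.FG ∧ Submodule.span ℚ (L : Set V) = ⊤ ∧
    (∀ x y : V, B x y = B y x) ∧
    (∀ x : V, (∀ y : V, B x y = 0) → x = 0) ∧
    (∀ x ∈ L, ∀ y ∈ L, ∃ a : ℤ, B x y = (a : ℚ))

/-- The lattice is even: `(x,x) ∈ 2ℤ` for all `x ∈ L`. -/
def IsEvenLat {V : Type} [AddCommGroup V] [Module ℚ V]
    (B : V →ₗ[ℚ] V →ₗ[ℚ] ℚ) (L : Submodule ℤ V) : Prop :=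
  ∀ x ∈ L, ∃ a : ℤ, B x x = 2 * (a : ℚ)

/-- The form `B` has signature `(2,n)`: it diagonalizes with exactly `2` positive and
`n` negative diagonal entries. -/
def HasSignatureTwo {V : Type} [AddCommGroup V] [Module ℚ V]
    (B : V →ₗ[ℚ] V →ₗ[ℚ] ℚ) (n : ℕ) : Prop :=
  ∃ b : Module.Basis (Fin (2 + n)) ℚ V,
    (∀ i j, i ≠ j → B (b i) (b j) = 0) ∧
    Nat.card {i : Fin (2 + n) // 0 < B (b i) (b i)} = 2 ∧
    Nat.card {i : Fin (2 + n) // B (b i) (b i) < 0} = n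

/-- `r` is a primitive vector of `L`: `ℚr ∩ L = ℤr`. -/
def IsPrimitiveVec {V : Type} [AddCommGroup V] [Module ℚ V]
    (L : Submodule ℤ V) (r : V) : Prop :=
  r ∈ L ∧ ∀ x ∈ L, (∃ q : ℚ, x = q • r) → ∃ a : ℤ, x = a • r

/-- The reflection `σ_r : l ↦ l − (2(l,r)/(r,r))·r` on `V = L ⊗ ℚ`. -/
def reflVec {V : Type} [AddCommGroup V] [Module ℚ V]
    (B : V →ₗ[ℚ] V →ₗ[ℚ] ℚ) (r : V) (l : V) : V :=
  l - (2 * B l r / B r r) • r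

/-- `s` is the divisor `div(r)` of `r`: the positive generator of the ideal
`{(r,l) : l ∈ L} ⊆ ℤ`. -/
def IsDivOf {V : Type} [AddCommGroup V] [Module ℚ V]
    (B : V →ₗ[ℚ] V →ₗ[ℚ] ℚ) (L : Submodule ℤ V) (r : V) (s : ℤ) : Prop :=
  0 < s ∧ (∀ l ∈ L, ∃ a : ℤ, B r l = ((s * a : ℤ) : ℚ)) ∧ ∃ l ∈ L, B r l = (s : ℚ)

/-- `D` is the exponent of the (finite abelian) discriminant group `A_L = L^∨/L`:
the smallest positive integer annihilating `L^∨/L` (characterized by dividing every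
positive annihilator). -/
def IsExponentOf {V : Type} [AddCommGroup V] [Module ℚ V]
    (B : V →ₗ[ℚ] V →ₗ[ℚ] ℚ) (L : Submodule ℤ V) (D : ℤ) : Prop :=
  0 < D ∧ (∀ y ∈ DualSet B L, D • y ∈ L) ∧
    ∀ D' : ℤ, 0 < D' → (∀ y ∈ DualSet B L, D' • y ∈ L) → D ∣ D'

lemma clear_denom' {V : Type} [AddCommGroup V] [Module ℚ V]
    (L : Submodule ℤ V) {v : V} (hv : v ∈ Submodule.span ℚ (L : Set V)) :
    ∃ N : ℤ, N ≠ 0 ∧ (N : ℚ) • v ∈ L := by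
  induction hv using Submodule.span_induction with
  | mem x hx => exact ⟨1, one_ne_zero, by simpa using hx⟩
  | zero => exact ⟨1, one_ne_zero, by simp⟩
  | add x y _ _ hx hy =>
    obtain ⟨N₁, hN₁, h₁⟩ := hx
    obtain ⟨N₂, hN₂, h₂⟩ := hy
    refine ⟨N₁ * N₂, mul_ne_zero hN₁ hN₂, ?_⟩
    have e : ((N₁ * N₂ : ℤ) : ℚ) • (x + y)
        = N₂ • ((N₁ : ℚ) • x) + N₁ • ((N₂ : ℚ) • y) := by
      rw [← Int.cast_smul_eq_zsmul ℚ N₂, ← Int.cast_smul_eq_zsmul ℚ N₁,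
        smul_smul, smul_smul, smul_add]
      push_cast
      ring_nf
    rw [e]
    exact L.add_mem (L.smul_mem _ h₁) (L.smul_mem _ h₂)
  | smul q x _ hx =>
    obtain ⟨N, hN, h⟩ := hx
    refine ⟨(q.den : ℤ) * N, mul_ne_zero (by exact_mod_cast q.den_nz) hN, ?_⟩
    have e : (((q.den : ℤ) * N : ℤ) : ℚ) • (q • x) = q.num • ((N : ℚ) • x) := by
      rw [← Int.cast_smul_eq_zsmul ℚ q.num, smul_smul, smul_smul]
      push_cast
      rw [mul_comm ((q.den : ℚ)) (N : ℚ), mul_assoc, Rat.den_mul_eq_num]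
      ring_nf
    rw [e]
    exact L.smul_mem _ h

lemma smul_cancel' {V : Type} [AddCommGroup V] [Module ℚ V]
    {r : V} (hr : r ≠ 0) {p q : ℚ} (h : p • r = q • r) : p = q := by
  by_contra hne
  have h2 : (p - q) • r = 0 := by rw [sub_smul, h, sub_self]
  rcases smul_eq_zero.mp h2 with h3 | h3
  · exact hne (sub_eq_zero.mp h3)
  · exact hr h3

/-- Let `L` be an even lattice of signature `(2,n)`, `D` the exponent of
`A_L`, and `r ∈ L` a stably reflective vector (primitive, `(r,r) < 0`, and `σ_r` or
`−σ_r` lies in `Õ(L)`).  Assume it is not the case that `D = 4`, `(r,r) = −4` and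
`div(r) = 2`.  Let `K_r = {x ∈ L : (x,r) = 0}`.  Then every `φ ∈ Õ(L)` with
`φ(K_r) = K_r` restricts on `K_r` to an element of `Õ(K_r)`: the `ℚ`-linear extension of
`φ` satisfies `φ(y) − y ∈ K_r` for every `y ∈ K_r^∨`. -/
theorem restriction_to_orthogonal_complement_is_stable
    {V : Type} [AddCommGroup V] [Module ℚ V]
    (B : V →ₗ[ℚ] V →ₗ[ℚ] ℚ) (L : Submodule ℤ V) (n : ℕ)
    (hlat : IsIntLattice B L) (heven : IsEvenLat B L) (hsig : HasSignatureTwo B n)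
    (D : ℤ) (hD : IsExponentOf B L D)
    (r : V) (hprim : IsPrimitiveVec L r) (hneg : B r r < 0)
    -- `r` is stably reflective: `σ_r` or `−σ_r` maps `L` into itself and lies in `Õ(L)`:
    (hrefl : ((∀ l ∈ L, reflVec B r l ∈ L) ∧
                ∀ y ∈ DualSet B L, reflVec B r y - y ∈ L) ∨
             ((∀ l ∈ L, -(reflVec B r l) ∈ L) ∧
                ∀ y ∈ DualSet B L, -(reflVec B r y) - y ∈ L))
    (s : ℤ) (hs : IsDivOf B L r s)
    -- excluded case: `D = 4`, `(r,r) = −4`, `div(r) = 2`: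
    (hexc : ¬(D = 4 ∧ B r r = -4 ∧ s = 2))
    (φ : V →ₗ[ℚ] V)
    -- `φ ∈ Õ(L)`:
    (hφbij : Set.BijOn φ (L : Set V) (L : Set V))
    (hφiso : ∀ x ∈ L, ∀ y ∈ L, B (φ x) (φ y) = B x y)
    (hφstab : ∀ y ∈ DualSet B L, φ y - y ∈ L)
    -- `φ(K_r) = K_r`:
    (hφK : φ '' {x : V | x ∈ L ∧ B x r = 0} = {x : V | x ∈ L ∧ B x r = 0}) :
    -- conclusion: `φ(y) − y ∈ K_r` for every `y ∈ K_r^∨ ⊆ K_r ⊗ ℚ`: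
    ∀ y ∈ Submodule.span ℚ {x : V | x ∈ L ∧ B x r = 0},
      (∀ k ∈ ({x : V | x ∈ L ∧ B x r = 0} : Set V), ∃ a : ℤ, B y k = (a : ℚ)) →
        φ y - y ∈ {x : V | x ∈ L ∧ B x r = 0} := by
  intro y hy hyK
  obtain ⟨hFG, hspan, hsym, hnondeg, hint⟩ := hlat
  obtain ⟨hspos, hdiv, l₀, hl₀L, hl₀⟩ := hs
  have hrL : r ∈ L := hprim.1
  have hBrrne : B r r ≠ 0 := ne_of_lt hneg
  have hr0 : r ≠ 0 := by
    intro h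
    rw [h] at hneg
    simp at hneg
  have hsne : (s : ℚ) ≠ 0 := Int.cast_ne_zero.mpr (ne_of_gt hspos)
  -- y and φ y are orthogonal to r
  have hspanperp : Submodule.span ℚ {x : V | x ∈ L ∧ B x r = 0}
      ≤ LinearMap.ker (B.flip r) := by
    rw [Submodule.span_le]
    intro x hx
    simpa [LinearMap.mem_ker] using hx.2
  have hyr : B y r = 0 := by simpa using hspanperp hy
  have hφy_span : φ y ∈ Submodule.span ℚ {x : V | x ∈ L ∧ B x r = 0} := by
    have h1 := Submodule.apply_mem_span_image_of_mem_span φ hy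
    rwa [hφK] at h1
  have hφyr : B (φ y) r = 0 := by simpa using hspanperp hφy_span
  -- φ r = lam • r with lam = ±1
  have hperp : ∀ v : V, B v r = 0 → B (φ r) v = 0 := by
    intro v hvr
    have hvtop : v ∈ Submodule.span ℚ (L : Set V) := by rw [hspan]; trivial
    obtain ⟨N, hN0, hNv⟩ := clear_denom' L hvtop
    have hNvS : (N : ℚ) • v ∈ {x : V | x ∈ L ∧ B x r = 0} := by
      refine ⟨hNv, ?_⟩
      simp [map_smul, smul_eq_mul, hvr]
    have h1 : (N : ℚ) • v ∈ φ '' {x : V | x ∈ L ∧ B x r = 0} := by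
      rw [hφK]; exact hNvS
    obtain ⟨x, hxS, hxeq⟩ := h1
    have h2 : B (φ r) ((N : ℚ) • v) = 0 := by
      rw [← hxeq, hφiso r hrL x hxS.1, hsym r x, hxS.2]
    rw [map_smul, smul_eq_mul] at h2
    rcases mul_eq_zero.mp h2 with h3 | h3
    · exact absurd h3 (Int.cast_ne_zero.mpr hN0)
    · exact h3
  obtain ⟨lam, hφreq⟩ : ∃ lam : ℚ, φ r = lam • r := by
    refine ⟨B (φ r) r / B r r, ?_⟩
    have hker : ∀ v : V, B (φ r - (B (φ r) r / B r r) • r) v = 0 := by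
      intro v
      have hvperp : B (v - (B v r / B r r) • r) r = 0 := by
        rw [map_sub, map_smul, LinearMap.sub_apply, LinearMap.smul_apply, smul_eq_mul]
        field_simp
        ring
      have e1 : B (φ r) v = (B v r / B r r) * B (φ r) r := by
        have h1 := hperp _ hvperp
        rw [map_sub, map_smul, smul_eq_mul] at h1
        linarith
      have e2 : B r v = B v r := hsym r v
      rw [map_sub, map_smul, LinearMap.sub_apply, LinearMap.smul_apply, smul_eq_mul,
        e1, e2]
      field_simp
      ring
    have := hnondeg _ hker
    exact sub_eq_zero.mp this
  have hlam : lam = 1 ∨ lam = -1 := by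
    have h := hφiso r hrL r hrL
    rw [hφreq, map_smul, map_smul, LinearMap.smul_apply, smul_eq_mul, smul_eq_mul] at h
    have h2 : lam * lam = 1 := by
      have h3 : (lam * lam) * B r r = 1 * B r r := by linear_combination h
      exact mul_right_cancel₀ hBrrne h3
    exact mul_self_eq_one_iff.mp h2
  -- conclusion component 2
  have hgoal2 : B (φ y - y) r = 0 := by
    rw [map_sub, LinearMap.sub_apply, hφyr, hyr, sub_zero]
  -- decomposition of L
  have hdecomp : ∀ l ∈ L, ∃ a : ℤ, ∃ k, (k ∈ L ∧ B k r = 0) ∧ l = k + (a : ℚ) • l₀ := by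
    intro l hl
    obtain ⟨a, ha⟩ := hdiv l hl
    refine ⟨a, l - (a : ℚ) • l₀, ⟨?_, ?_⟩, by module⟩
    · rw [Int.cast_smul_eq_zsmul ℚ a l₀]
      exact L.sub_mem hl (L.smul_mem a hl₀L)
    · rw [map_sub, map_smul, LinearMap.sub_apply, LinearMap.smul_apply, smul_eq_mul,
        hsym l r, hsym l₀ r, ha, hl₀]
      push_cast
      ring
  -- dual elements of the form y + c • r
  have hW : ∀ c : ℚ, (∃ j : ℤ, c * (s : ℚ) + B y l₀ = (j : ℚ)) →
      (y + c • r) ∈ DualSet B L := by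
    intro c hc l hl
    obtain ⟨j, hj⟩ := hc
    obtain ⟨a, k, ⟨hkL, hkr⟩, rfl⟩ := hdecomp l hl
    obtain ⟨b, hb⟩ := hyK k ⟨hkL, hkr⟩
    refine ⟨b + a * j, ?_⟩
    have hrk : B r k = 0 := by rw [hsym r k, hkr]
    have e : B (y + c • r) (k + (a : ℚ) • l₀)
        = B y k + (a : ℚ) * (B y l₀ + c * (s : ℚ)) + c * B r k := by
      simp only [map_add, map_smul, LinearMap.add_apply, LinearMap.smul_apply,
        smul_eq_mul, hl₀]
      ring
    rw [e, hrk, hb]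
    rw [add_comm (c * (s : ℚ)) (B y l₀)] at hj
    rw [hj]
    push_cast
    ring
  -- the main reduction
  have hmain : ∀ c : ℚ, (∃ j : ℤ, c * (s : ℚ) + B y l₀ = (j : ℚ)) →
      ((c * (lam - 1)) • r ∈ L) → φ y - y ∈ L := by
    intro c hc hcr
    have hwd := hW c hc
    have hst := hφstab _ hwd
    have hid : φ y - y = (φ (y + c • r) - (y + c • r)) - (c * (lam - 1)) • r := by
      have h1 : φ (y + c • r) = φ y + c • (lam • r) := by
        rw [map_add, map_smul, hφreq]
      rw [h1]
      module
    rw [hid]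
    exact L.sub_mem hst hcr
  refine ⟨?_, hgoal2⟩
  -- default c
  have hc₀ : (-(B y l₀) / (s : ℚ)) * (s : ℚ) + B y l₀ = ((0 : ℤ) : ℚ) := by
    field_simp
    norm_num
  rcases hlam with hlam1 | hlam1
  · -- lam = 1
    exact hmain _ ⟨0, hc₀⟩ (by rw [hlam1]; simp)
  · -- lam = -1
    have hBwr : ∀ c : ℚ, B (y + c • r) r = c * B r r := by
      intro c
      rw [map_add, map_smul, LinearMap.add_apply, LinearMap.smul_apply, smul_eq_mul,
        hyr, zero_add]
    rcases hrefl with ⟨hA1, hA2⟩ | ⟨hB1, hB2⟩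
    · -- σ_r ∈ Õ(L)
      set c₀ := -(B y l₀) / (s : ℚ) with hc₀def
      have hwd := hW c₀ ⟨0, hc₀⟩
      have h2 := hA2 _ hwd
      have h3 : reflVec B r (y + c₀ • r) - (y + c₀ • r) = (-(2 * c₀)) • r := by
        unfold reflVec
        rw [hBwr c₀]
        have e : 2 * (c₀ * B r r) / B r r = 2 * c₀ := by field_simp
        rw [e]
        module
      rw [h3] at h2
      apply hmain c₀ ⟨0, hc₀⟩
      have e : c₀ * (lam - 1) = -(2 * c₀) := by rw [hlam1]; ring
      rw [e]
      exact h2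
    · -- -σ_r ∈ Õ(L)
      set c₀ := -(B y l₀) / (s : ℚ) with hc₀def
      have hwd₀ := hW c₀ ⟨0, hc₀⟩
      have hz : (2 : ℚ) • y ∈ L := by
        have h2 := hB2 _ hwd₀
        have h3 : -(reflVec B r (y + c₀ • r)) - (y + c₀ • r) = -((2 : ℚ) • y) := by
          unfold reflVec
          rw [hBwr c₀]
          have e : 2 * (c₀ * B r r) / B r r = 2 * c₀ := by field_simp
          rw [e]
          module
        rw [h3] at h2
        exact neg_mem_iff.mp h2
      -- s = 1 or s = 2
      have hσd : ((s : ℚ)⁻¹ • r) ∈ DualSet B L := by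
        intro l hl
        obtain ⟨a, ha⟩ := hdiv l hl
        refine ⟨a, ?_⟩
        rw [map_smul, LinearMap.smul_apply, smul_eq_mul, ha]
        push_cast
        field_simp
      have hφσ := hφstab _ hσd
      have hφσeq : φ ((s : ℚ)⁻¹ • r) - (s : ℚ)⁻¹ • r = (-2 / (s : ℚ)) • r := by
        rw [map_smul, hφreq, hlam1, smul_smul, ← sub_smul]
        congr 1
        field_simp
        ring
      rw [hφσeq] at hφσ
      obtain ⟨a, ha⟩ := hprim.2 _ hφσ ⟨_, rfl⟩
      rw [← Int.cast_smul_eq_zsmul ℚ a r] at ha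
      have ha' : (-2 / (s : ℚ)) = (a : ℚ) := smul_cancel' hr0 ha
      have hsa : s * a = -2 := by
        have h4 : (s : ℚ) * (a : ℚ) = -2 := by
          rw [← ha']
          field_simp
        exact_mod_cast h4
      have hs12 : s = 1 ∨ s = 2 := by
        have hdvd : s ∣ 2 := ⟨-a, by rw [mul_neg, hsa, neg_neg]⟩
        have := Int.le_of_dvd (by norm_num) hdvd
        omega
      rcases hs12 with hs1 | hs1
      · -- s = 1
        obtain ⟨m, hm⟩ := hint _ hz _ hl₀L
        have hByl₀ : B y l₀ = (m : ℚ) / 2 := by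
          rw [map_smul, LinearMap.smul_apply, smul_eq_mul] at hm
          linarith
        apply hmain (-(B y l₀)) ⟨0, by rw [hs1]; push_cast; ring⟩
        have e : -(B y l₀) * (lam - 1) = (m : ℚ) := by
          rw [hlam1, hByl₀]; ring
        rw [e, Int.cast_smul_eq_zsmul ℚ m r]
        exact L.smul_mem m hrL
      · -- s = 2
        -- B r r = -2 or -4
        obtain ⟨a₂, ha₂⟩ : ∃ a₂ : ℤ, 2 * (s : ℚ) / B r r = (a₂ : ℚ) := by
          have h5 := hB1 l₀ hl₀L
          have hBl₀r : B l₀ r = (s : ℚ) := by rw [hsym l₀ r, hl₀]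
          have h6 : (2 * (s : ℚ) / B r r) • r ∈ L := by
            have e : -(reflVec B r l₀) + l₀ = (2 * (s : ℚ) / B r r) • r := by
              unfold reflVec
              rw [hBl₀r]
              module
            rw [← e]
            exact L.add_mem h5 hl₀L
          obtain ⟨a₂, ha₂⟩ := hprim.2 _ h6 ⟨_, rfl⟩
          rw [← Int.cast_smul_eq_zsmul ℚ a₂ r] at ha₂
          exact ⟨a₂, smul_cancel' hr0 ha₂⟩
        obtain ⟨a₁, hBrre⟩ := hdiv r hrL
        have ha₁neg : a₁ < 0 := by
          rw [hBrre] at hneg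
          have : (s * a₁ : ℤ) < 0 := by exact_mod_cast hneg
          nlinarith [hspos]
        have hprod : a₁ * a₂ = 2 := by
          have h7 : (2 * (s : ℚ)) = (a₂ : ℚ) * B r r := by
            rw [← ha₂]
            field_simp
          rw [hBrre, hs1] at h7
          have h8 : (4 : ℚ) = ((a₂ * (2 * a₁) : ℤ) : ℚ) := by
            push_cast
            push_cast [hs1] at h7
            linarith
          have h9 : (4 : ℤ) = a₂ * (2 * a₁) := by exact_mod_cast h8
          nlinarith [h9]
        have ha₁cases : a₁ = -1 ∨ a₁ = -2 := by
          have hdvd : (-a₁) ∣ 2 := ⟨-a₂, by rw [neg_mul_neg, hprod]⟩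
          have := Int.le_of_dvd (by norm_num) hdvd
          omega
        have hBrrval : B r r = -2 ∨ B r r = -4 := by
          rcases ha₁cases with h | h
          · left; rw [hBrre, hs1, h]; norm_num
          · right; rw [hBrre, hs1, h]; norm_num
        rcases hBrrval with hBrrval | hBrrval
        · -- B r r = -2 : y is in the dual of L
          have hyd : ∃ j : ℤ, B y l₀ = (j : ℚ) := by
            obtain ⟨b, hb⟩ := hdiv l₀ hl₀L
            have hkS : (l₀ + (b : ℚ) • r) ∈ {x : V | x ∈ L ∧ B x r = 0} := by
              refine ⟨?_, ?_⟩
              · rw [Int.cast_smul_eq_zsmul ℚ b r]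
                exact L.add_mem hl₀L (L.smul_mem b hrL)
              · rw [map_add, map_smul, LinearMap.add_apply, LinearMap.smul_apply,
                  smul_eq_mul, hsym l₀ r, hb, hBrrval, hs1]
                push_cast
                ring
            obtain ⟨j, hj⟩ := hyK _ hkS
            refine ⟨j, ?_⟩
            rw [map_add, map_smul, smul_eq_mul, hyr, mul_zero, add_zero] at hj
            exact hj
          obtain ⟨j, hj⟩ := hyd
          exact hmain 0 ⟨j, by rw [hj]; ring⟩ (by simp)
        · -- B r r = -4
          obtain ⟨m, hm⟩ := hint _ hz _ hl₀L
          have hByl₀ : B y l₀ = (m : ℚ) / 2 := by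
            rw [map_smul, LinearMap.smul_apply, smul_eq_mul] at hm
            linarith
          have hmeven : ∃ m' : ℤ, m = 2 * m' := by
            by_contra hodd
            push_neg at hodd
            have hcd : (-(m : ℚ) / 4) * (s : ℚ) + B y l₀ = ((0 : ℤ) : ℚ) := by
              rw [hs1, hByl₀]
              push_cast
              ring
            have hwd := hW _ ⟨0, hcd⟩
            set w := y + (-(m : ℚ) / 4) • r with hwdef
            have h4w : (4 : ℚ) • w ∈ L := by
              have e : (4 : ℚ) • w = (2 : ℚ) • ((2 : ℚ) • y) + (-(m : ℚ)) • r := by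
                rw [hwdef]
                match_scalars <;> ring
              rw [e, show ((2:ℚ)) = ((2:ℤ):ℚ) by norm_num,
                Int.cast_smul_eq_zsmul ℚ (2 : ℤ), show (-(m:ℚ)) = ((-m : ℤ):ℚ) by push_cast; ring,
                Int.cast_smul_eq_zsmul ℚ (-m : ℤ) r]
              exact L.add_mem (L.smul_mem _ hz) (L.smul_mem _ hrL)
            have h2w : ¬((2 : ℚ) • w ∈ L) := by
              intro hmem
              have he : ((m : ℚ) / 2) • r = (2 : ℚ) • y - (2 : ℚ) • w := by
                rw [hwdef]
                match_scalars <;> ring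
              have hmr : ((m : ℚ) / 2) • r ∈ L := by
                rw [he]; exact L.sub_mem hz hmem
              obtain ⟨a3, ha3⟩ := hprim.2 _ hmr ⟨_, rfl⟩
              rw [← Int.cast_smul_eq_zsmul ℚ a3 r] at ha3
              have := smul_cancel' hr0 ha3
              have hm2 : m = 2 * a3 := by
                have : (m : ℚ) = 2 * (a3 : ℚ) := by linarith [this]
                exact_mod_cast this
              exact hodd a3 hm2
            have hwnL : w ∉ L := by
              intro hw
              apply h2w
              have e : (2 : ℚ) • w = w + w := by module
              rw [e]; exact L.add_mem hw hw
            have hann : ∀ v ∈ DualSet B L, (4 : ℤ) • v ∈ L := by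
              intro v hv
              obtain ⟨a3, ha3⟩ := hv r hrL
              have h7 := hB2 v hv
              have h8 : -(reflVec B r v) - v = (-2 : ℚ) • v + (-(a3 : ℚ) / 2) • r := by
                unfold reflVec
                rw [ha3, hBrrval]
                match_scalars <;> ring
              have h9 : (-2 : ℤ) • (-(reflVec B r v) - v) = (4 : ℚ) • v + (a3 : ℚ) • r := by
                rw [h8, ← Int.cast_smul_eq_zsmul ℚ (-2 : ℤ)]
                push_cast
                match_scalars <;> ring
              have h10 : (4 : ℚ) • v + (a3 : ℚ) • r ∈ L := by
                rw [← h9]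
                exact L.smul_mem _ h7
              have h11 : (4 : ℚ) • v ∈ L := by
                have h12 : (a3 : ℚ) • r ∈ L := by
                  rw [Int.cast_smul_eq_zsmul ℚ a3 r]
                  exact L.smul_mem _ hrL
                have := L.sub_mem h10 h12
                simpa using this
              rw [show ((4:ℤ) • v) = ((4:ℤ):ℚ) • v by rw [Int.cast_smul_eq_zsmul]]
              push_cast
              exact h11
            have hD4 : D ∣ 4 := hD.2.2 4 (by norm_num) hann
            have h4wZ : (4 : ℤ) • w ∈ L := by
              rw [show ((4:ℤ) • w) = ((4:ℤ):ℚ) • w by rw [Int.cast_smul_eq_zsmul]]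
              push_cast
              exact h4w
            have h4D : (4 : ℤ) ∣ D := by
              have hDw := hD.2.1 _ hwd
              have hsplit : (D % 4) • w = D • w - (D / 4) • ((4 : ℤ) • w) := by
                rw [smul_smul, ← sub_smul]
                congr 1
                omega
              have heL : (D % 4) • w ∈ L := by
                rw [hsplit]
                exact L.sub_mem hDw (L.smul_mem _ h4wZ)
              have h2wZ : ¬((2 : ℤ) • w ∈ L) := by
                intro h
                apply h2w
                rwa [← Int.cast_smul_eq_zsmul ℚ (2:ℤ) w, Int.cast_ofNat] at h
              have hmod : D % 4 = 0 ∨ D % 4 = 1 ∨ D % 4 = 2 ∨ D % 4 = 3 := by omega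
              rcases hmod with h | h | h | h
              · exact Int.dvd_of_emod_eq_zero h
              · rw [h, one_smul] at heL
                exact absurd heL hwnL
              · rw [h] at heL
                exact absurd heL h2wZ
              · exfalso
                apply hwnL
                have := L.sub_mem h4wZ (h ▸ heL)
                rw [← sub_smul] at this
                norm_num at this
                exact this
            have hDeq : D = 4 := Int.dvd_antisymm (le_of_lt hD.1) (by norm_num) hD4 h4D
            exact hexc ⟨hDeq, hBrrval, hs1⟩
          obtain ⟨m', hm'⟩ := hmeven
          have hByl₀' : B y l₀ = (m' : ℚ) := by
            rw [hByl₀, hm']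
            push_cast
            ring
          apply hmain (-(m' : ℚ) / 2) ⟨0, by rw [hs1, hByl₀']; push_cast; ring⟩
          have e : (-(m' : ℚ) / 2) * (lam - 1) = ((m' : ℤ) : ℚ) := by
            rw [hlam1]; push_cast; ring
          rw [e, Int.cast_smul_eq_zsmul ℚ m' r]
          exact L.smul_mem m' hrL
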